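/- In the finite-dimensional discrete-spectrum clock setup, the commutator of the first-moment time operator with the clock Hamiltonian is T̂ ∘ Ĥ_C − Ĥ_C ∘ T̂ = i ( id − |t_max⟩⟨t_max| ), where |t_max⟩ = Σ_j e^{i g(j)} e^{−i ε_j t_max} e_j is the clock state at time t_max and |t_max⟩⟨t_max| is the (unnormalized) rank-one operator ψ ↦ ⟨t_max, ψ⟩ |t_max⟩. -/

import Mathlib

open MeasureTheory

noncomputable section

/-- The rank-one operator `|v⟩⟨w| : ψ ↦ ⟨w, ψ⟩ v` on a complex inner product space. -/
noncomputable def ketbra {H : Type*} [NormedAddCommGroup H] [InnerProductSpace ℂ H]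
    (v w : H) : H →L[ℂ] H :=
  (ContinuousLinearMap.toSpanSingleton ℂ v).comp (innerSL ℂ w)

section Aux

variable {H : Type*} [NormedAddCommGroup H] [InnerProductSpace ℂ H]

lemma ketbra_apply' (v w ψ : H) : ketbra v w ψ = (inner ℂ w ψ : ℂ) • v := rfl

lemma ketbra_sum_sum {n : ℕ} (a d : Fin n → ℂ) (b : Fin n → H) :
    ketbra (∑ j, a j • b j) (∑ k, d k • b k)
      = ∑ j, ∑ k, (a j * (starRingEnd ℂ) (d k)) • ketbra (b j) (b k) := by
  ext ψ
  simp only [ketbra_apply', ContinuousLinearMap.sum_apply, sum_inner, inner_smul_left,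
    Finset.sum_smul, Finset.smul_sum, smul_smul]
  refine Finset.sum_congr rfl fun j _ => ?_
  rw [Finset.sum_mul, Finset.sum_smul]
  refine Finset.sum_congr rfl fun k _ => ?_
  rw [ContinuousLinearMap.smul_apply, ketbra_apply', smul_smul]
  congr 1; ring

lemma ketbra_comp_ketbra (v w x y : H) :
    (ketbra v w).comp (ketbra x y) = (inner ℂ w x : ℂ) • ketbra v y := by
  ext ψ
  simp only [ContinuousLinearMap.comp_apply, ketbra_apply', ContinuousLinearMap.smul_apply,
    inner_smul_right, smul_smul]
  congr 1; ring

lemma ketbra_resolution {n : ℕ} (b : OrthonormalBasis (Fin n) ℂ H) :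
    ∑ j, ketbra (b j) (b j) = (1 : H →L[ℂ] H) := by
  ext ψ
  simp only [ContinuousLinearMap.sum_apply, ketbra_apply', ContinuousLinearMap.one_apply]
  exact b.sum_repr' ψ

lemma integral_t_exp (c : ℂ) (hc : c ≠ 0) (T : ℝ) :
    ∫ t in (0:ℝ)..T, (t : ℂ) * Complex.exp (c * t)
      = ((T : ℂ)/c - 1/c^2) * Complex.exp (c * T) + 1/c^2 := by
  have key : ∀ t : ℝ, HasDerivAt (fun s : ℝ => ((s : ℂ)/c - 1/c^2) * Complex.exp (c * s))
      ((t : ℂ) * Complex.exp (c * t)) t := by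
    intro t
    have h1 : HasDerivAt (fun s : ℝ => ((s : ℂ)/c - 1/c^2)) (1/c) t := by
      have h0 : HasDerivAt (fun s : ℝ => ((s : ℂ))) 1 t := by
        simpa using (hasDerivAt_id t).ofReal_comp
      exact (h0.div_const c).sub_const (1/c^2)
    have h2 : HasDerivAt (fun s : ℝ => Complex.exp (c * s)) (c * Complex.exp (c * t)) t := by
      simpa [mul_comm] using (((Complex.hasDerivAt_exp (c * t)).comp
        (t:ℂ) ((hasDerivAt_id (t:ℂ)).const_mul c)).comp_ofReal)
    have : HasDerivAt (fun s : ℝ => ((s : ℂ)/c - 1/c^2) * Complex.exp (c * s))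
        (1 / c * Complex.exp (c * t) + (t / c - 1 / c ^ 2) * (c * Complex.exp (c * t))) t := h1.mul h2
    convert this using 1
    field_simp
    ring
  rw [intervalIntegral.integral_eq_sub_of_hasDerivAt (fun t _ => key t)
    (by apply Continuous.intervalIntegrable; continuity)]
  simp

end Aux

/-- **Commutator of the time operator with the clock Hamiltonian.**  For the
finite-dimensional discrete-spectrum clock with Hamiltonian `HC = Σ_j ε_j |b j⟩⟨b j|`,
covariant clock states `|t⟩ = Σ_j e^{i g j} e^{-i ε_j t} b j`, and first-moment time operator
`T = (1/t_max) ∫₀^{t_max} t |t⟩⟨t| dt`, one has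
`[T, HC] = i (id - |t_max⟩⟨t_max|)`. -/
theorem time_operator_commutator
    {H : Type*} [NormedAddCommGroup H] [InnerProductSpace ℂ H] [FiniteDimensional ℂ H]
    (n : ℕ) (hn : 1 ≤ n) (b : OrthonormalBasis (Fin n) ℂ H)
    (tmax φ : ℝ) (htmax : 0 < tmax)
    (nj : Fin n → ℤ) (hnj : Function.Injective nj)
    (g : Fin n → ℝ)
    (ε : Fin n → ℝ) (hε : ∀ j, ε j = (2 * Real.pi * (nj j : ℝ) + φ) / tmax)
    (ct : ℝ → H)
    (hct : ∀ t : ℝ, ct t = ∑ j : Fin n,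
      (Complex.exp (Complex.I * (g j : ℝ)) * Complex.exp (-Complex.I * (ε j : ℝ) * t)) • b j)
    (HC : H →L[ℂ] H) (hHC : HC = ∑ j : Fin n, ((ε j : ℝ) : ℂ) • ketbra (b j) (b j))
    (T : H →L[ℂ] H)
    (hT : T = (1 / tmax) • ∫ t in (0:ℝ)..tmax, t • ketbra (ct t) (ct t)) :
    T.comp HC - HC.comp T
      = Complex.I • ((1 : H →L[ℂ] H) - ketbra (ct tmax) (ct tmax)) := by
  classical
  have hb : ∀ j k : Fin n, (inner ℂ (b j) (b k) : ℂ) = if j = k then 1 else 0 :=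
    orthonormal_iff_ite.mp b.orthonormal
  set c : Fin n → ℝ → ℂ := fun j t =>
    Complex.exp (Complex.I * (g j : ℝ)) * Complex.exp (-Complex.I * (ε j : ℝ) * t) with hcdef
  -- single-exponential form and conjugate
  have hcform : ∀ (j : Fin n) (t : ℝ),
      c j t = Complex.exp (Complex.I * ((g j : ℝ) - (ε j : ℝ) * t)) := by
    intro j t
    show Complex.exp _ * Complex.exp _ = _
    rw [← Complex.exp_add]
    congr 1
    push_cast
    ring
  have hcconj : ∀ (j : Fin n) (t : ℝ),
      (starRingEnd ℂ) (c j t) = Complex.exp (-(Complex.I * ((g j : ℝ) - (ε j : ℝ) * t))) := by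
    intro j t
    rw [hcform, ← Complex.exp_conj]
    congr 1
    simp [map_mul, map_sub, Complex.conj_I, Complex.conj_ofReal]
  have hcont : ∀ j k : Fin n,
      Continuous fun t : ℝ => (t : ℂ) * (c j t * (starRingEnd ℂ) (c k t)) := by
    intro j k
    simp only [hcconj]
    simp only [hcform]
    fun_prop
  have hcoe : ∀ (r : ℝ) (X : H →L[ℂ] H), r • X = ((r : ℂ)) • X := by
    intro r X
    ext ψ
    rw [ContinuousLinearMap.smul_apply, ContinuousLinearMap.smul_apply, Complex.coe_smul]
  have hP : ∀ t : ℝ, ketbra (ct t) (ct t)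
      = ∑ j, ∑ k, (c j t * (starRingEnd ℂ) (c k t)) • ketbra (b j) (b k) := by
    intro t
    rw [hct t]
    exact ketbra_sum_sum _ _ _
  set τ : Fin n → Fin n → ℂ := fun j k =>
    (1 / (tmax : ℂ)) * ∫ t in (0:ℝ)..tmax, (t:ℂ) * (c j t * (starRingEnd ℂ) (c k t)) with hτ
  -- expansion of T
  have hTexp : T = ∑ j, ∑ k, τ j k • ketbra (b j) (b k) := by
    rw [hT, hcoe]
    have hfun : ∀ t : ℝ, t • ketbra (ct t) (ct t)
        = ∑ j, ∑ k, ((t:ℂ) * (c j t * (starRingEnd ℂ) (c k t))) • ketbra (b j) (b k) := by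
      intro t
      rw [hcoe, hP t, Finset.smul_sum]
      refine Finset.sum_congr rfl fun j _ => ?_
      rw [Finset.smul_sum]
      refine Finset.sum_congr rfl fun k _ => ?_
      rw [smul_smul]
    rw [show (fun t : ℝ => t • ketbra (ct t) (ct t))
        = fun t : ℝ => ∑ j, ∑ k, ((t:ℂ) * (c j t * (starRingEnd ℂ) (c k t))) • ketbra (b j) (b k)
      from funext hfun]
    rw [intervalIntegral.integral_finset_sum (fun j _ => by
      apply Continuous.intervalIntegrable
      exact continuous_finset_sum _ (fun k _ => ((hcont j k).smul continuous_const)))]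
    rw [Finset.smul_sum]
    refine Finset.sum_congr rfl fun j _ => ?_
    rw [intervalIntegral.integral_finset_sum (fun k _ => by
      apply Continuous.intervalIntegrable
      exact (hcont j k).smul continuous_const)]
    rw [Finset.smul_sum]
    refine Finset.sum_congr rfl fun k _ => ?_
    rw [intervalIntegral.integral_smul_const, smul_smul]
    simp only [hτ]
    congr 1
    push_cast
    ring
  -- action of HC on basis ketbras
  have hKH : ∀ j k : Fin n, (ketbra (b j) (b k)).comp HC
      = ((ε k : ℝ) : ℂ) • ketbra (b j) (b k) := by
    intro j k
    rw [hHC, ContinuousLinearMap.comp_finset_sum]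
    have : ∀ l : Fin n, (ketbra (b j) (b k)).comp (((ε l : ℝ) : ℂ) • ketbra (b l) (b l))
        = (if k = l then ((ε l : ℝ) : ℂ) else 0) • ketbra (b j) (b l) := by
      intro l
      rw [ContinuousLinearMap.comp_smul, ketbra_comp_ketbra, hb, smul_smul]
      by_cases h : k = l <;> simp [h]
    simp only [this]
    rw [Finset.sum_congr rfl (fun l _ => by
      rw [show (if k = l then ((ε l : ℝ) : ℂ) else 0) • ketbra (b j) (b l)
        = if k = l then ((ε l : ℝ) : ℂ) • ketbra (b j) (b l) else 0 by
          by_cases h : k = l <;> simp [h]])]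
    rw [Finset.sum_ite_eq]
    simp
  have hHK : ∀ j k : Fin n, HC.comp (ketbra (b j) (b k))
      = ((ε j : ℝ) : ℂ) • ketbra (b j) (b k) := by
    intro j k
    rw [hHC, ContinuousLinearMap.finset_sum_comp]
    have : ∀ l : Fin n, ((((ε l : ℝ) : ℂ) • ketbra (b l) (b l)).comp (ketbra (b j) (b k)))
        = (if l = j then ((ε l : ℝ) : ℂ) else 0) • ketbra (b l) (b k) := by
      intro l
      rw [ContinuousLinearMap.smul_comp, ketbra_comp_ketbra, hb, smul_smul]
      by_cases h : l = j <;> simp [h]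
    simp only [this]
    rw [Finset.sum_congr rfl (fun l _ => by
      rw [show (if l = j then ((ε l : ℝ) : ℂ) else 0) • ketbra (b l) (b k)
        = if l = j then ((ε l : ℝ) : ℂ) • ketbra (b l) (b k) else 0 by
          by_cases h : l = j <;> simp [h]])]
    rw [Finset.sum_ite_eq']
    simp
  -- expansion of the commutator
  have expand : T.comp HC - HC.comp T
      = ∑ j, ∑ k, (τ j k * (((ε k : ℝ):ℂ) - ((ε j : ℝ):ℂ))) • ketbra (b j) (b k) := by
    rw [hTexp, ContinuousLinearMap.finset_sum_comp, ContinuousLinearMap.comp_finset_sum,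
      ← Finset.sum_sub_distrib]
    refine Finset.sum_congr rfl fun j _ => ?_
    rw [ContinuousLinearMap.finset_sum_comp, ContinuousLinearMap.comp_finset_sum,
      ← Finset.sum_sub_distrib]
    refine Finset.sum_congr rfl fun k _ => ?_
    rw [ContinuousLinearMap.smul_comp, ContinuousLinearMap.comp_smul, hKH, hHK,
      smul_smul, smul_smul, ← sub_smul]
    congr 1
    ring
  -- expansion of the RHS
  have rhsexp : Complex.I • ((1 : H →L[ℂ] H) - ketbra (ct tmax) (ct tmax))
      = ∑ j, ∑ k, (Complex.I * ((if j = k then (1:ℂ) else 0)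
          - c j tmax * (starRingEnd ℂ) (c k tmax))) • ketbra (b j) (b k) := by
    have h1 : (1 : H →L[ℂ] H)
        = ∑ j, ∑ k, (if j = k then (1:ℂ) else 0) • ketbra (b j) (b k) := by
      rw [← ketbra_resolution b]
      refine Finset.sum_congr rfl fun j _ => ?_
      rw [Finset.sum_congr rfl (fun k _ => by
        rw [show (if j = k then (1:ℂ) else 0) • ketbra (b j) (b k)
          = if j = k then ketbra (b j) (b k) else 0 by by_cases h : j = k <;> simp [h]])]
      rw [Finset.sum_ite_eq]
      simp
    rw [h1, hP tmax, ← Finset.sum_sub_distrib, Finset.smul_sum]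
    refine Finset.sum_congr rfl fun j _ => ?_
    rw [← Finset.sum_sub_distrib, Finset.smul_sum]
    refine Finset.sum_congr rfl fun k _ => ?_
    rw [← sub_smul, smul_smul]
  -- key scalar identity
  have key : ∀ j k : Fin n, τ j k * (((ε k : ℝ):ℂ) - ((ε j : ℝ):ℂ))
      = Complex.I * ((if j = k then (1:ℂ) else 0)
          - c j tmax * (starRingEnd ℂ) (c k tmax)) := by
    intro j k
    by_cases hjk : j = k
    · subst hjk
      have hone : c j tmax * (starRingEnd ℂ) (c j tmax) = 1 := by
        rw [hcconj, hcform, ← Complex.exp_add, add_neg_cancel, Complex.exp_zero]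
      simp [hone]
    · -- distinct frequencies
      set m : ℤ := nj j - nj k with hm
      have hm0 : (m : ℝ) ≠ 0 := by
        simp only [hm]
        exact_mod_cast sub_ne_zero.mpr (fun h => hjk (hnj h))
      have hω : ε j - ε k = 2 * Real.pi * (m : ℝ) / tmax := by
        rw [hε j, hε k, hm]
        push_cast
        field_simp
        ring
      have hωne : ε j - ε k ≠ 0 := by
        rw [hω]
        exact div_ne_zero
          (mul_ne_zero (mul_ne_zero two_ne_zero Real.pi_ne_zero) hm0) htmax.ne'
      have hc0 : (-Complex.I * ((ε j - ε k : ℝ) : ℂ)) ≠ 0 := by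
        apply mul_ne_zero
        · simpa using Complex.I_ne_zero
        · exact Complex.ofReal_ne_zero.mpr hωne
      have hprod : ∀ t : ℝ, c j t * (starRingEnd ℂ) (c k t)
          = Complex.exp (Complex.I * ((g j : ℝ) - (g k : ℝ)))
            * Complex.exp ((-Complex.I * ((ε j - ε k : ℝ):ℂ)) * (t:ℝ)) := by
        intro t
        rw [hcconj, hcform, ← Complex.exp_add, ← Complex.exp_add]
        congr 1
        push_cast
        ring
      have hexpT : Complex.exp ((-Complex.I * ((ε j - ε k : ℝ):ℂ)) * (tmax:ℝ)) = 1 := by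
        have h1 : ((ε j - ε k : ℝ) : ℂ) * ((tmax : ℝ) : ℂ) = 2 * (Real.pi : ℂ) * (m:ℂ) := by
          rw [show ((ε j - ε k : ℝ) : ℂ) * ((tmax : ℝ) : ℂ) = (((ε j - ε k) * tmax : ℝ) : ℂ) by
            push_cast; ring]
          rw [show (ε j - ε k) * tmax = 2 * Real.pi * (m : ℝ) by
            rw [hω]; field_simp]
          push_cast
          ring
        rw [show (-Complex.I * ((ε j - ε k : ℝ):ℂ)) * (tmax:ℝ)
            = -(((ε j - ε k : ℝ) : ℂ) * ((tmax : ℝ) : ℂ)) * Complex.I by ring, h1]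
        rw [show -(2 * (Real.pi : ℂ) * (m:ℂ)) * Complex.I
            = ((-m : ℤ) : ℂ) * (2 * (Real.pi : ℂ) * Complex.I) by push_cast; ring]
        exact Complex.exp_int_mul_two_pi_mul_I (-m)
      have hint : ∫ t in (0:ℝ)..tmax, (t:ℂ) * (c j t * (starRingEnd ℂ) (c k t))
          = Complex.exp (Complex.I * ((g j : ℝ) - (g k : ℝ)))
            * ((tmax : ℂ) / (-Complex.I * ((ε j - ε k : ℝ):ℂ))) := by
        rw [show (fun t : ℝ => (t:ℂ) * (c j t * (starRingEnd ℂ) (c k t)))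
            = fun t : ℝ => Complex.exp (Complex.I * ((g j : ℝ) - (g k : ℝ)))
              * ((t:ℂ) * Complex.exp ((-Complex.I * ((ε j - ε k : ℝ):ℂ)) * (t:ℝ))) from
          funext fun t => by rw [hprod t]; ring]
        rw [intervalIntegral.integral_const_mul, integral_t_exp _ hc0, hexpT]
        ring
      have hτval : τ j k = (1 / (tmax : ℂ)) * (Complex.exp (Complex.I * ((g j : ℝ) - (g k : ℝ)))
            * ((tmax : ℂ) / (-Complex.I * ((ε j - ε k : ℝ):ℂ)))) := by
        simp only [hτ]
        rw [hint]
      rw [hτval, if_neg hjk, hprod tmax, hexpT]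
      have htc : ((tmax : ℝ) : ℂ) ≠ 0 := Complex.ofReal_ne_zero.mpr htmax.ne'
      have hsub : ((ε k : ℝ):ℂ) - ((ε j : ℝ):ℂ) = -(((ε j - ε k : ℝ)):ℂ) := by
        push_cast; ring
      rw [hsub]
      field_simp
      ring_nf
      have hd : (Complex.I * ((ε k : ℝ):ℂ) - Complex.I * ((ε j : ℝ):ℂ)) ≠ 0 := by
        rw [← mul_sub]
        refine mul_ne_zero Complex.I_ne_zero ?_
        intro h
        apply hωne
        rw [sub_eq_zero]
        exact (Complex.ofReal_inj.mp (sub_eq_zero.mp h)).symm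
      rw [mul_assoc, mul_inv_cancel₀ (Complex.ofReal_ne_zero.mpr hωne), Complex.I_sq]
      ring
  rw [expand, rhsexp]
  exact Finset.sum_congr rfl fun j _ => Finset.sum_congr rfl fun k _ => by rw [key j k]

end
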